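/- There exist 2×2 unitary matrices A, B, C, D such that CNOT = (A ⊗ B) · exp(−i (π/4) σ₁⊗σ₁) · (C ⊗ D). (The CNOT gate is locally equivalent to the gate with interaction content (π/4, 0, 0).) -/

import Mathlib

open Matrix Complex Real NormedSpace

noncomputable section

/-- Pauli matrix `σ₁`. -/
def σ1 : Matrix (Fin 2) (Fin 2) ℂ := !![0, 1; 1, 0]
/-- Pauli matrix `σ₂`. -/
def σ2 : Matrix (Fin 2) (Fin 2) ℂ := !![0, -I; I, 0]
/-- Pauli matrix `σ₃`. -/
def σ3 : Matrix (Fin 2) (Fin 2) ℂ := !![1, 0; 0, -1]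

/-- Kronecker product of two `2×2` matrices as a `4×4` matrix, with the index ordering
`|00⟩,|01⟩,|10⟩,|11⟩` (i.e. index `2*i+j` corresponds to `|i⟩⊗|j⟩`). -/
def kron (A B : Matrix (Fin 2) (Fin 2) ℂ) : Matrix (Fin 4) (Fin 4) ℂ :=
  Matrix.of fun i j =>
    A ⟨i.val / 2, by have := i.isLt; omega⟩ ⟨j.val / 2, by have := j.isLt; omega⟩ *
      B ⟨i.val % 2, by have := i.isLt; omega⟩ ⟨j.val % 2, by have := j.isLt; omega⟩

/-- The Hamiltonian `H_α = α₁ σ₁⊗σ₁ + α₂ σ₂⊗σ₂ + α₃ σ₃⊗σ₃`. -/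
def Hmat (a : Fin 3 → ℝ) : Matrix (Fin 4) (Fin 4) ℂ :=
  (a 0 : ℂ) • kron σ1 σ1 + (a 1 : ℂ) • kron σ2 σ2 + (a 2 : ℂ) • kron σ3 σ3

/-- The magic basis matrix: column `j` is the `j`-th magic basis vector, written in the
computational basis `|00⟩,|01⟩,|10⟩,|11⟩`. -/
def Mmag : Matrix (Fin 4) (Fin 4) ℂ :=
  !![0,                      1 / (Real.sqrt 2 : ℂ), -I / (Real.sqrt 2 : ℂ), 0;
     -I / (Real.sqrt 2 : ℂ), 0,                     0,                      1 / (Real.sqrt 2 : ℂ);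
     -I / (Real.sqrt 2 : ℂ), 0,                     0,                      -(1 / (Real.sqrt 2 : ℂ));
     0,                      1 / (Real.sqrt 2 : ℂ), I / (Real.sqrt 2 : ℂ),  0]

/-- `λ(α) = (α₁+α₂−α₃, α₁−α₂+α₃, −α₁+α₂+α₃, −α₁−α₂−α₃)`, the vector of eigenvalues of `H_α`
in the magic basis. -/
def lamv (a : Fin 3 → ℝ) : Fin 4 → ℝ :=
  ![a 0 + a 1 - a 2, a 0 - a 1 + a 2, -a 0 + a 1 + a 2, -a 0 - a 1 - a 2]

def s2 : ℂ := (Real.sqrt 2 : ℝ)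

lemma s2_sq : s2 * s2 = 2 := by
  have : Real.sqrt 2 * Real.sqrt 2 = 2 := Real.mul_self_sqrt (by norm_num)
  simp [s2, ← Complex.ofReal_mul, this]

lemma s2_ne : s2 ≠ 0 := by
  simp [s2, Real.sqrt_eq_zero']

def U0 : Matrix (Fin 4) (Fin 4) ℂ := !![1,0,0,1; 0,1,1,0; 0,1,-1,0; 1,0,0,-1]

def Umat : Matrix (Fin 4) (Fin 4) ℂ := s2⁻¹ • U0

lemma U0U0 : U0 * U0 = (2:ℂ) • 1 := by
  ext i j
  fin_cases i <;> fin_cases j <;>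
    simp [U0, Matrix.mul_apply, Fin.sum_univ_four] <;> norm_num

lemma inv_s2_sq : s2⁻¹ * s2⁻¹ = 1/2 := by
  rw [← mul_inv, s2_sq]
  norm_num

lemma UU : Umat * Umat = 1 := by
  rw [Umat, Matrix.smul_mul, Matrix.mul_smul, U0U0, smul_smul, smul_smul, inv_s2_sq]
  norm_num

def vvec : Fin 4 → ℂ := ![-(π/4)*I, -(π/4)*I, (π/4)*I, (π/4)*I]

lemma Uinv : Umat⁻¹ = Umat := Matrix.inv_eq_right_inv UU

lemma conj_eq (X : Matrix (Fin 4) (Fin 4) ℂ) :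
    Umat * X * Umat = (1/2 : ℂ) • (U0 * X * U0) := by
  rw [Umat, Matrix.smul_mul, Matrix.smul_mul, Matrix.mul_smul, smul_smul, inv_s2_sq]

lemma diag_v : diagonal vvec =
    !![-(π/4)*I,0,0,0; 0,-(π/4)*I,0,0; 0,0,(π/4)*I,0; 0,0,0,(π/4)*I] := by
  ext i j
  fin_cases i <;> fin_cases j <;> simp [vvec, Matrix.diagonal_apply, Matrix.vecHead, Matrix.vecTail]

lemma kss : kron σ1 σ1 = !![0,0,0,1; 0,0,1,0; 0,1,0,0; 1,0,0,0] := by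
  ext i j
  fin_cases i <;> fin_cases j <;>
    norm_num [kron, σ1, Fin.mk_zero, Fin.mk_one, Matrix.vecHead, Matrix.vecTail]

set_option maxHeartbeats 1000000 in
lemma hM : -((π / 4 : ℂ) • I • kron σ1 σ1) = Umat * diagonal vvec * Umat⁻¹ := by
  rw [Uinv, conj_eq, diag_v, kss]
  ext i j
  fin_cases i <;> fin_cases j <;>
    simp [U0, Matrix.mul_apply, Fin.sum_univ_four, Matrix.vecHead, Matrix.vecTail] <;> ring

lemma exp_pi4 : Complex.exp ((π/4)*I) = s2⁻¹ * (1 + I) := by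
  rw [show ((π:ℂ)/4*I) = ((π/4:ℝ):ℂ)*I by push_cast; ring, Complex.exp_mul_I,
    ← Complex.ofReal_cos, ← Complex.ofReal_sin,
    Real.cos_pi_div_four, Real.sin_pi_div_four]
  have h := s2_ne
  push_cast
  rw [show ((Real.sqrt 2:ℝ):ℂ) = s2 from rfl]
  field_simp
  linear_combination (1+I) * s2_sq

lemma exp_neg_pi4 : Complex.exp (-((π:ℂ)/4 * I)) = s2⁻¹ * (1 - I) := by
  rw [show (-((π:ℂ)/4 * I)) = ((-(π/4):ℝ):ℂ)*I by push_cast; ring, Complex.exp_mul_I,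
    ← Complex.ofReal_cos, ← Complex.ofReal_sin, Real.cos_neg, Real.sin_neg,
    Real.cos_pi_div_four, Real.sin_pi_div_four]
  have h := s2_ne
  push_cast
  rw [show ((Real.sqrt 2:ℝ):ℂ) = s2 from rfl]
  field_simp
  linear_combination (1-I) * s2_sq

lemma diag_exp : diagonal (NormedSpace.exp vvec) =
    !![s2⁻¹*(1-I),0,0,0; 0,s2⁻¹*(1-I),0,0; 0,0,s2⁻¹*(1+I),0; 0,0,0,s2⁻¹*(1+I)] := by
  ext i j
  fin_cases i <;> fin_cases j <;>
    simp [vvec, Matrix.diagonal_apply, Pi.exp_def, ← Complex.exp_eq_exp_ℂ,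
      Matrix.vecHead, Matrix.vecTail, exp_pi4, exp_neg_pi4, neg_mul]

set_option maxHeartbeats 1000000 in
lemma hE : NormedSpace.exp (-((π / 4 : ℂ) • I • kron σ1 σ1)) =
    s2⁻¹ • !![1,0,0,-I; 0,1,-I,0; 0,-I,1,0; -I,0,0,1] := by
  rw [hM, Matrix.exp_conj Umat (diagonal vvec) ⟨⟨Umat, Umat, UU, UU⟩, rfl⟩, Matrix.exp_diagonal, Uinv,
    conj_eq, diag_exp]
  ext i j
  fin_cases i <;> fin_cases j <;>
    simp [U0, Matrix.mul_apply, Fin.sum_univ_four] <;> ring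

def Am : Matrix (Fin 2) (Fin 2) ℂ := !![(1+I)/2, (1+I)/2; (1-I)/2, (-1+I)/2]
def Bm : Matrix (Fin 2) (Fin 2) ℂ := !![(1-I)/2, (1+I)/2; (1+I)/2, (1-I)/2]
def H0 : Matrix (Fin 2) (Fin 2) ℂ := !![1, 1; 1, -1]
def Cm : Matrix (Fin 2) (Fin 2) ℂ := s2⁻¹ • H0

lemma Am_unitary : Am ∈ Matrix.unitaryGroup (Fin 2) ℂ := by
  rw [Matrix.mem_unitaryGroup_iff]
  ext i j
  fin_cases i <;> fin_cases j <;>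
    simp [Am, Matrix.mul_apply, Fin.sum_univ_two, Matrix.conjTranspose_apply,
      Matrix.vecHead, Matrix.vecTail, map_add, map_sub, map_div₀, _root_.map_one, map_neg,
      map_ofNat, Complex.conj_I] <;>
    first
      | ring1
      | linear_combination (1/2 : ℂ) * Complex.I_sq
      | linear_combination (-1/2 : ℂ) * Complex.I_sq
      | linear_combination (I/2 : ℂ) * Complex.I_sq
      | linear_combination (-I/2 : ℂ) * Complex.I_sq
      | linear_combination (1/4 : ℂ) * Complex.I_sq
      | linear_combination (-1/4 : ℂ) * Complex.I_sq
      | linear_combination (I/4 : ℂ) * Complex.I_sq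
      | linear_combination (-I/4 : ℂ) * Complex.I_sq

lemma Bm_unitary : Bm ∈ Matrix.unitaryGroup (Fin 2) ℂ := by
  rw [Matrix.mem_unitaryGroup_iff]
  ext i j
  fin_cases i <;> fin_cases j <;>
    simp [Bm, Matrix.mul_apply, Fin.sum_univ_two, Matrix.conjTranspose_apply,
      Matrix.vecHead, Matrix.vecTail, map_add, map_sub, map_div₀, _root_.map_one, map_neg,
      map_ofNat, Complex.conj_I] <;>
    first
      | ring1
      | linear_combination (1/2 : ℂ) * Complex.I_sq
      | linear_combination (-1/2 : ℂ) * Complex.I_sq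
      | linear_combination (I/2 : ℂ) * Complex.I_sq
      | linear_combination (-I/2 : ℂ) * Complex.I_sq
      | linear_combination (1/4 : ℂ) * Complex.I_sq
      | linear_combination (-1/4 : ℂ) * Complex.I_sq
      | linear_combination (I/4 : ℂ) * Complex.I_sq
      | linear_combination (-I/4 : ℂ) * Complex.I_sq

lemma Cm_unitary : Cm ∈ Matrix.unitaryGroup (Fin 2) ℂ := by
  rw [Matrix.mem_unitaryGroup_iff]
  have hs : (starRingEnd ℂ) s2⁻¹ = s2⁻¹ := by
    simp [s2, ← Complex.ofReal_inv]
  ext i j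
  fin_cases i <;> fin_cases j <;>
    simp [Cm, H0, Matrix.mul_apply, Fin.sum_univ_two, Matrix.conjTranspose_apply,
      Matrix.vecHead, Matrix.vecTail, hs, inv_s2_sq] <;>
    norm_num [← mul_inv, s2_sq] <;> linear_combination s2_sq

lemma kron_smul_left (c : ℂ) (X Y : Matrix (Fin 2) (Fin 2) ℂ) :
    kron (c • X) Y = c • kron X Y := by
  ext i j
  simp [kron, Matrix.smul_apply, smul_eq_mul]
  ring

lemma fv0 : ((0 : Fin 4) : ℕ) = 0 := rfl
lemma fv1 : ((1 : Fin 4) : ℕ) = 1 := rfl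
lemma fv2 : ((2 : Fin 4) : ℕ) = 2 := rfl
lemma fv3 : ((3 : Fin 4) : ℕ) = 3 := rfl
lemma vc41 (a : ℂ) (f : Fin 3 → ℂ) : vecCons a f (1 : Fin 4) = f 0 := rfl
lemma vc42 (a : ℂ) (f : Fin 3 → ℂ) : vecCons a f (2 : Fin 4) = f 1 := rfl
lemma vc43 (a : ℂ) (f : Fin 3 → ℂ) : vecCons a f (3 : Fin 4) = f 2 := rfl
lemma vc31 (a : ℂ) (f : Fin 2 → ℂ) : vecCons a f (1 : Fin 3) = f 0 := rfl
lemma vc32 (a : ℂ) (f : Fin 2 → ℂ) : vecCons a f (2 : Fin 3) = f 1 := rfl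
lemma vc21 (a : ℂ) (f : Fin 1 → ℂ) : vecCons a f (1 : Fin 2) = f 0 := rfl

set_option maxHeartbeats 1000000 in
theorem stmt16' :
    (!![1, 0, 0, 0; 0, 1, 0, 0; 0, 0, 0, 1; 0, 0, 1, 0] : Matrix (Fin 4) (Fin 4) ℂ) =
        kron Am Bm * NormedSpace.exp (-((π / 4 : ℂ) • I • kron σ1 σ1)) * kron Cm 1 := by
  rw [hE, Cm, kron_smul_left, Matrix.mul_smul, Matrix.mul_smul, Matrix.smul_mul,
    smul_smul, inv_s2_sq]
  ext i j
  fin_cases i <;> fin_cases j <;>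
    norm_num [Am, Bm, H0, kron, Matrix.mul_apply, Fin.sum_univ_four, Matrix.one_apply,
      Fin.mk.injEq, fv0, fv1, fv2, fv3,
      Matrix.vecHead, Matrix.vecTail, Fin.mk_zero, Fin.mk_one, vc41, vc42, vc43, vc31, vc32, vc21] <;>
    first
      | ring1
      | (ring_nf;
         norm_num [Complex.I_sq, show (I:ℂ)^3 = -I from by
            rw [pow_succ, Complex.I_sq]; ring,
          show (I:ℂ)^4 = 1 from by
            rw [show (4:ℕ) = 2*2 from rfl, pow_mul, Complex.I_sq]; ring];
         try ring1)


theorem stmt16 :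
    ∃ A B C D : Matrix (Fin 2) (Fin 2) ℂ,
      A ∈ Matrix.unitaryGroup (Fin 2) ℂ ∧
      B ∈ Matrix.unitaryGroup (Fin 2) ℂ ∧
      C ∈ Matrix.unitaryGroup (Fin 2) ℂ ∧
      D ∈ Matrix.unitaryGroup (Fin 2) ℂ ∧
      (!![1, 0, 0, 0; 0, 1, 0, 0; 0, 0, 0, 1; 0, 0, 1, 0] : Matrix (Fin 4) (Fin 4) ℂ) =
        kron A B * NormedSpace.exp (-((π / 4 : ℂ) • I • kron σ1 σ1)) * kron C D :=
  ⟨Am, Bm, Cm, 1, Am_unitary, Bm_unitary, Cm_unitary, one_mem _, stmt16'⟩
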